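/- Let n ≥ 1 and let J : ℝ → Matrix (Fin n) (Fin n) ℝ be continuous. Let v : ℝ → Matrix (Fin n) (Fin n) ℝ be differentiable with v(0) = 1 (the identity matrix) and v′(t) = J(t) * v(t) for all t. Then for all t ∈ ℝ, det (v(t)) = exp (∫₀ᵗ trace (J(s)) ds). -/

import Mathlib

open Finset Matrix


/-- Derivative of the determinant along a curve of matrices, entrywise. -/
lemma hasDerivAt_det_aux {n : ℕ} (v : ℝ → Matrix (Fin n) (Fin n) ℝ)
    (A : Matrix (Fin n) (Fin n) ℝ) (t : ℝ)
    (hv : ∀ i j, HasDerivAt (fun τ => v τ i j) (A i j) t) :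
    HasDerivAt (fun τ => (v τ).det)
      (∑ r : Fin n, ((v t).updateRow r (A r)).det) t := by
  have h : ∀ σ : Equiv.Perm (Fin n),
      HasDerivAt (fun τ => (Equiv.Perm.sign σ : ℝ) * ∏ i, v τ (σ i) i)
        ((Equiv.Perm.sign σ : ℝ) *
          ∑ i, (∏ j ∈ Finset.univ.erase i, v t (σ j) j) * A (σ i) i) t := by
    intro σ
    have := (HasDerivAt.finset_prod (u := Finset.univ)
      (f := fun i τ => v τ (σ i) i) (f' := fun i => A (σ i) i)
      (fun i _ => hv (σ i) i)).const_mul ((Equiv.Perm.sign σ : ℝ))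
    simpa [smul_eq_mul] using this
  have H := HasDerivAt.fun_sum (u := Finset.univ) (fun σ _ => h σ)
  have heq : (fun τ => (v τ).det) =
      fun τ => ∑ σ : Equiv.Perm (Fin n), (Equiv.Perm.sign σ : ℝ) * ∏ i, v τ (σ i) i := by
    funext τ; rw [Matrix.det_apply']
  rw [heq]
  refine H.congr_deriv ?_
  symm
  -- identify the claimed derivative with the computed one
  have key : ∀ r : Fin n, ((v t).updateRow r (A r)).det =
      ∑ σ : Equiv.Perm (Fin n), (Equiv.Perm.sign σ : ℝ) *
        ((∏ j ∈ Finset.univ.erase (σ⁻¹ r), v t (σ j) j) * A r (σ⁻¹ r)) := by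
    intro r
    rw [Matrix.det_apply']
    refine Finset.sum_congr rfl fun σ _ => ?_
    congr 1
    have hmem : (σ⁻¹ r : Fin n) ∈ (Finset.univ : Finset (Fin n)) := Finset.mem_univ _
    rw [← Finset.mul_prod_erase Finset.univ _ hmem]
    have h1 : ((v t).updateRow r (A r)) (σ (σ⁻¹ r)) (σ⁻¹ r) = A r (σ⁻¹ r) := by
      simp
    rw [h1]
    rw [mul_comm]
    congr 1
    refine Finset.prod_congr rfl fun j hj => ?_
    have hj' : σ j ≠ r := by
      intro hc
      apply (Finset.mem_erase.mp hj).1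
      have := congrArg σ.symm hc
      simpa using this
    rw [Matrix.updateRow_ne hj']
  rw [Finset.sum_congr rfl (fun r _ => key r), Finset.sum_comm]
  refine Finset.sum_congr rfl fun σ _ => ?_
  rw [← Finset.mul_sum]
  congr 1
  -- reindex r = σ i
  rw [← Equiv.sum_comp σ (fun r => (∏ j ∈ Finset.univ.erase (σ⁻¹ r), v t (σ j) j) * A r (σ⁻¹ r))]
  refine Finset.sum_congr rfl fun i _ => ?_
  simp

/-- Liouville's formula (Abel–Jacobi–Liouville): for the fundamental solution of
the linear matrix ODE `v′(t) = J(t) v(t)` with `v(0) = I`, the determinant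
satisfies `det v(t) = exp (∫₀ᵗ trace J(s) ds)`. -/
theorem liouville_formula
    (n : ℕ) (hn : 1 ≤ n)
    (J : ℝ → Matrix (Fin n) (Fin n) ℝ) (hJ : Continuous J)
    (v : ℝ → Matrix (Fin n) (Fin n) ℝ)
    (hv0 : v 0 = 1)
    (hv : ∀ (t : ℝ) (i j : Fin n),
      HasDerivAt (fun τ => v τ i j) ((J t * v t) i j) t) :
    ∀ t : ℝ, (v t).det = Real.exp (∫ s in (0:ℝ)..t, (J s).trace) := by
  -- derivative of the determinant
  have hdet : ∀ t : ℝ, HasDerivAt (fun τ => (v τ).det) ((J t).trace * (v t).det) t := by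
    intro t
    have := hasDerivAt_det_aux v (J t * v t) t (fun i j => hv t i j)
    convert this using 1
    have : ∀ r : Fin n, ((v t).updateRow r ((J t * v t) r)).det = J t r r * (v t).det := by
      intro r
      have hrow : (J t * v t) r = ∑ k, (J t r k) • v t k := by
        funext j
        simp [Matrix.mul_apply, Finset.sum_apply]
      rw [hrow, Matrix.det_updateRow_sum]
      simp
    rw [Finset.sum_congr rfl fun r _ => this r, Matrix.trace]
    simp [Finset.sum_mul, Matrix.diag]
  -- continuity of trace ∘ J
  have htr : Continuous fun s => (J s).trace := hJ.matrix_trace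
  -- the integral and its derivative
  set F : ℝ → ℝ := fun t => ∫ s in (0:ℝ)..t, (J s).trace with hF
  have hFd : ∀ t : ℝ, HasDerivAt F ((J t).trace) t := fun t =>
    (htr.integral_hasStrictDerivAt 0 t).hasDerivAt
  -- the auxiliary function is constant
  set g : ℝ → ℝ := fun t => (v t).det * Real.exp (-(F t)) with hg
  have hgd : ∀ t : ℝ, HasDerivAt g 0 t := by
    intro t
    have he : HasDerivAt (fun τ => Real.exp (-(F τ)))
        (Real.exp (-(F t)) * (-(J t).trace)) t := by
      have := (Real.hasDerivAt_exp (-(F t))).comp t ((hFd t).fun_neg)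
      simpa [mul_comm, Function.comp_def] using this
    have := (hdet t).mul he
    refine this.congr_deriv ?_
    ring
  have hconst : ∀ t : ℝ, g t = g 0 := by
    intro t
    exact is_const_of_deriv_eq_zero (fun x => (hgd x).differentiableAt)
      (fun x => (hgd x).deriv) t 0
  have hg0 : g 0 = 1 := by
    simp [hg, hF, hv0]
  intro t
  have h1 := hconst t
  rw [hg0] at h1
  have h2 : (v t).det * Real.exp (-(F t)) = 1 := h1
  have h3 : Real.exp (-(F t)) ≠ 0 := Real.exp_ne_zero _
  have h4 : (v t).det = Real.exp (F t) := by
    rw [Real.exp_neg, mul_inv_eq_one₀ (Real.exp_ne_zero _)] at h2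
    linarith [h2]
  exact h4
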